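/- Let X be a two-dimensional real Banach space, x ∈ S_X, and ε ∈ [0,1). Then there exist v₁, v₂ ∈ S_X such that the normal cone K = {αv₁ + βv₂ : α, β ≥ 0} satisfies F(x, ε) = K ∪ (−K), where F(x, ε) = {y ∈ X : ‖x + λy‖ ≥ √(1−ε²) for all λ ∈ ℝ}. -/

import Mathlib

set_option maxHeartbeats 1000000

theorem F_eq_cone_union_neg_cone {X : Type*} [NormedAddCommGroup X] [NormedSpace ℝ X]
    [FiniteDimensional ℝ X] (hdim : Module.finrank ℝ X = 2)
    (x : X) (hx : ‖x‖ = 1) (ε : ℝ) (hε0 : 0 ≤ ε) (hε1 : ε < 1) :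
    ∃ v₁ v₂ : X, ‖v₁‖ = 1 ∧ ‖v₂‖ = 1 ∧
      ({w : X | ∃ α β : ℝ, 0 ≤ α ∧ 0 ≤ β ∧ w = α • v₁ + β • v₂} ∩
        -{w : X | ∃ α β : ℝ, 0 ≤ α ∧ 0 ≤ β ∧ w = α • v₁ + β • v₂} = {0}) ∧
      {y : X | ∀ l : ℝ, ‖x + l • y‖ ≥ Real.sqrt (1 - ε ^ 2)} =
        {w : X | ∃ α β : ℝ, 0 ≤ α ∧ 0 ≤ β ∧ w = α • v₁ + β • v₂} ∪
          -{w : X | ∃ α β : ℝ, 0 ≤ α ∧ 0 ≤ β ∧ w = α • v₁ + β • v₂} := by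
  classical
  set c : ℝ := Real.sqrt (1 - ε ^ 2) with hcdef
  have hx0 : x ≠ 0 := by
    intro h; rw [h, norm_zero] at hx; norm_num at hx
  have hc0 : 0 < c := Real.sqrt_pos.2 (by nlinarith)
  have hc1 : c ≤ 1 := by
    calc c ≤ Real.sqrt 1 := Real.sqrt_le_sqrt (by nlinarith)
    _ = 1 := Real.sqrt_one
  -- norming functional
  obtain ⟨f₀, hf₀norm, hf₀x'⟩ := exists_dual_vector ℝ x (norm_ne_zero_iff.2 hx0)
  have hf₀x : f₀ x = 1 := by rw [show f₀ x = ‖x‖ by simpa using hf₀x', hx]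
  -- a vector independent from x
  have hspan : (Submodule.span ℝ {x}) ≠ ⊤ := by
    intro h
    have h1 : Module.finrank ℝ (Submodule.span ℝ {x}) = 1 := finrank_span_singleton hx0
    rw [h, finrank_top, hdim] at h1
    norm_num at h1
  obtain ⟨e, he⟩ : ∃ e : X, e ∉ Submodule.span ℝ {x} := by
    by_contra h; push_neg at h; exact hspan (Submodule.eq_top_iff'.2 h)
  have hind : LinearIndependent ℝ ![x, e] := by
    rw [linearIndependent_fin2]
    refine ⟨?_, ?_⟩
    · show e ≠ 0
      intro h; exact he (h ▸ Submodule.zero_mem _)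
    · show ∀ a : ℝ, a • e ≠ x
      intro a ha
      have ha0 : a ≠ 0 := by
        intro h; rw [h, zero_smul] at ha; exact hx0 ha.symm
      apply he
      rw [Submodule.mem_span_singleton]
      exact ⟨a⁻¹, by rw [← ha, smul_smul, inv_mul_cancel₀ ha0, one_smul]⟩
  have hcard : Fintype.card (Fin 2) = Module.finrank ℝ X := by simp [hdim]
  let B := basisOfLinearIndependentOfCardEqFinrank hind hcard
  have hB : ∀ i, B i = ![x, e] i := fun i =>
    congrFun (coe_basisOfLinearIndependentOfCardEqFinrank hind hcard) i
  have hB0 : B 0 = x := hB 0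
  have hB1 : B 1 = e := hB 1
  let z : X →L[ℝ] ℝ := LinearMap.toContinuousLinearMap (B.coord 1)
  have hz : ∀ y : X, z y = B.repr y 1 := fun y => rfl
  have hzx : z x = 0 := by
    rw [hz, ← hB0, B.repr_self]
    simp
  have hze : z e = 1 := by
    rw [hz, ← hB1, B.repr_self]
    simp
  -- representation of any vector
  have hrepr : ∀ y : X, y = B.repr y 0 • x + B.repr y 1 • e := by
    intro y
    conv_lhs => rw [← B.sum_repr y]
    rw [Fin.sum_univ_two, hB0, hB1]
  -- injectivity: a functional with g x = 1 together with z separates points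
  have hinj : ∀ (g : X →L[ℝ] ℝ), g x = 1 → ∀ y : X, g y = 0 → z y = 0 → y = 0 := by
    intro g hg y h1 h2
    rw [hz] at h2
    have hy : y = B.repr y 0 • x := by
      conv_lhs => rw [hrepr y]
      rw [h2, zero_smul, add_zero]
    have hgy : g y = B.repr y 0 := by
      conv_lhs => rw [hy]
      rw [map_smul, hg, smul_eq_mul, mul_one]
    have h0 : B.repr y 0 = 0 := by rw [← hgy, h1]
    calc y = B.repr y 0 • x := hy
    _ = (0:ℝ) • x := by rw [h0]
    _ = 0 := zero_smul _ _
  -- any functional killing x is a multiple of z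
  have hker : ∀ h : X →L[ℝ] ℝ, h x = 0 → h = (h e) • z := by
    intro h hh
    ext y
    rw [ContinuousLinearMap.smul_apply, smul_eq_mul]
    conv_lhs => rw [hrepr y]
    rw [map_add, map_smul, map_smul, hh, smul_zero, zero_add, smul_eq_mul, hz]
    ring
  have hzne : z ≠ 0 := by
    intro h; rw [h] at hze; simp at hze
  have hznorm : 0 < ‖z‖ := norm_pos_iff.2 hzne
  have hns : ∀ (t : ℝ) (g : X →L[ℝ] ℝ), ‖t • g‖ = |t| * ‖g‖ := fun t g => by
    rw [show ‖t • g‖ = ‖t‖ * ‖g‖ from norm_smul t g, Real.norm_eq_abs]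
  -- the interval I
  set I : Set ℝ := {s : ℝ | c * ‖f₀ + s • z‖ ≤ 1} with hIdef
  have hI0 : (0 : ℝ) ∈ I := by
    show c * ‖f₀ + (0:ℝ) • z‖ ≤ 1
    rw [zero_smul, add_zero, hf₀norm, mul_one]
    exact hc1
  have hIbdd : ∀ s ∈ I, |s| ≤ (1 + 1/c)/‖z‖ := by
    intro s hs
    have h1 : c * ‖f₀ + s • z‖ ≤ 1 := hs
    have h2 : ‖f₀ + s • z‖ ≤ 1/c := by
      rw [le_div_iff₀ hc0]; linarith [h1, mul_comm c ‖f₀ + s • z‖]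
    have h3 : ‖s • z‖ ≤ ‖f₀ + s • z‖ + ‖f₀‖ := by
      calc ‖s • z‖ = ‖(f₀ + s • z) - f₀‖ := by rw [add_sub_cancel_left]
      _ ≤ ‖f₀ + s • z‖ + ‖f₀‖ := norm_sub_le _ _
    rw [hns, hf₀norm] at h3
    rw [le_div_iff₀ hznorm]
    nlinarith
  have hIclosed : IsClosed I := by
    have hcont : Continuous fun s : ℝ => c * ‖f₀ + s • z‖ := by
      apply Continuous.mul continuous_const
      exact (continuous_const.add (continuous_id.smul continuous_const)).norm
    exact isClosed_le hcont continuous_const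
  have hIcpt : IsCompact I := by
    apply Metric.isCompact_of_isClosed_isBounded hIclosed
    rw [isBounded_iff_forall_norm_le]
    exact ⟨(1 + 1/c)/‖z‖, fun s hs => hIbdd s hs⟩
  have hIne : I.Nonempty := ⟨0, hI0⟩
  set a : ℝ := sInf I with hadef
  set b : ℝ := sSup I with hbdef
  have haI : a ∈ I := hIcpt.sInf_mem hIne
  have hbI : b ∈ I := hIcpt.sSup_mem hIne
  have hmem_ab : ∀ s ∈ I, a ≤ s ∧ s ≤ b := fun s hs =>
    ⟨csInf_le hIcpt.bddBelow hs, le_csSup hIcpt.bddAbove hs⟩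
  have hab : a ≤ b := le_trans (hmem_ab 0 hI0).1 (hmem_ab 0 hI0).2
  set g₁ : X →L[ℝ] ℝ := f₀ + a • z with hg₁def
  set g₂ : X →L[ℝ] ℝ := f₀ + b • z with hg₂def
  have hg₁x : g₁ x = 1 := by
    simp only [hg₁def, ContinuousLinearMap.add_apply, ContinuousLinearMap.smul_apply,
      smul_eq_mul, hzx, mul_zero, add_zero, hf₀x]
  have hg₂x : g₂ x = 1 := by
    simp only [hg₂def, ContinuousLinearMap.add_apply, ContinuousLinearMap.smul_apply,
      smul_eq_mul, hzx, mul_zero, add_zero, hf₀x]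
  have hg₁Q : c * ‖g₁‖ ≤ 1 := haI
  have hg₂Q : c * ‖g₂‖ ≤ 1 := hbI
  have hg₂g₁ : ∀ w : X, g₂ w = g₁ w + (b - a) * z w := by
    intro w
    simp only [hg₁def, hg₂def, ContinuousLinearMap.add_apply, ContinuousLinearMap.smul_apply,
      smul_eq_mul]
    ring
  -- membership in the "dual cone" implies the norm lower bound
  have hQ_lower : ∀ (f : X →L[ℝ] ℝ) (y : X), f ≠ 0 → c * ‖f‖ ≤ f x → f y = 0 →
      ∀ l : ℝ, ‖x + l • y‖ ≥ c := by
    intro f y hfne hfQ hfy l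
    have hfn : 0 < ‖f‖ := norm_pos_iff.2 hfne
    have h1 : c * ‖f‖ ≤ f (x + l • y) := by
      rw [map_add, map_smul, smul_eq_mul, hfy, mul_zero, add_zero]
      exact hfQ
    have h2 : f (x + l • y) ≤ ‖f‖ * ‖x + l • y‖ := by
      calc f (x + l • y) ≤ |f (x + l • y)| := le_abs_self _
      _ = ‖f (x + l • y)‖ := (Real.norm_eq_abs _).symm
      _ ≤ ‖f‖ * ‖x + l • y‖ := f.le_opNorm _
    have := le_trans h1 h2
    exact le_of_mul_le_mul_left (by linarith [mul_comm c ‖f‖, mul_comm ‖f‖ ‖x + l • y‖]) hfn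
  -- the key characterization
  have hFchar : ∀ y : X, (∀ l : ℝ, ‖x + l • y‖ ≥ c) ↔ g₁ y * g₂ y ≤ 0 := by
    intro y
    constructor
    · intro hy
      -- separation
      have hconvt : Convex ℝ {p : X | ∃ l : ℝ, p = x + l • y} := by
        rintro p ⟨l₁, rfl⟩ q ⟨l₂, rfl⟩ s t hs ht hst
        refine ⟨s * l₁ + t * l₂, ?_⟩
        have : s • (x + l₁ • y) + t • (x + l₂ • y)
            = (s + t) • x + (s * l₁ + t * l₂) • y := by module
        rw [this, hst, one_smul]
      have hdisj : Disjoint (Metric.ball (0:X) c) {p : X | ∃ l : ℝ, p = x + l • y} := by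
        rw [Set.disjoint_left]
        rintro p hp ⟨l, rfl⟩
        rw [Metric.mem_ball, dist_zero_right] at hp
        exact absurd (hy l) (not_le.2 hp)
      obtain ⟨f, u, hfu1, hfu2⟩ := geometric_hahn_banach_open (convex_ball 0 c)
        Metric.isOpen_ball hconvt hdisj
      have hu0 : 0 < u := by
        have := hfu1 0 (by simp [Metric.mem_ball, hc0])
        simpa using this
      have hfy : f y = 0 := by
        by_contra hfy
        have h1 : u ≤ f (x + ((u - 1 - f x)/(f y)) • y) := hfu2 _ ⟨_, rfl⟩
        rw [map_add, map_smul, smul_eq_mul, div_mul_cancel₀ _ hfy] at h1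
        linarith
      have hfx : u ≤ f x := hfu2 x ⟨0, by rw [zero_smul, add_zero]⟩
      have hfnorm : ‖f‖ ≤ u / c := by
        apply ContinuousLinearMap.opNorm_le_bound _ (by positivity)
        intro w
        by_contra hw
        push_neg at hw
        have hfw0 : ‖f w‖ > 0 := lt_of_le_of_lt (by positivity) hw
        have hfw : f w ≠ 0 := by
          intro h; rw [h, norm_zero] at hfw0; exact lt_irrefl 0 hfw0
        set p := (u / f w) • w with hpdef
        have hfp : f p = u := by
          rw [hpdef, map_smul, smul_eq_mul, div_mul_cancel₀ _ hfw]
        have hpball : p ∈ Metric.ball (0:X) c := by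
          rw [Metric.mem_ball, dist_zero_right, hpdef,
            show ‖(u / f w) • w‖ = ‖u / f w‖ * ‖w‖ from norm_smul _ _, Real.norm_eq_abs,
            abs_div, abs_of_pos hu0]
          rw [Real.norm_eq_abs] at hw
          rw [div_mul_eq_mul_div, div_lt_iff₀ (abs_pos.2 hfw)]
          calc u * ‖w‖ = c * (u / c * ‖w‖) := by field_simp
          _ < c * |f w| := mul_lt_mul_of_pos_left hw hc0
        have := hfu1 p hpball
        rw [hfp] at this
        exact lt_irrefl u this
      have hcfu : c * ‖f‖ ≤ u := by
        have h4 : c * ‖f‖ ≤ c * (u / c) := mul_le_mul_of_nonneg_left hfnorm (le_of_lt hc0)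
        have h5 : c * (u / c) = u := by field_simp
        linarith
      have hfx0 : 0 < f x := lt_of_lt_of_le hu0 hfx
      -- normalize
      set h : X →L[ℝ] ℝ := (f x)⁻¹ • f with hhdef
      have hhx : h x = 1 := by
        rw [hhdef, ContinuousLinearMap.smul_apply, smul_eq_mul,
          inv_mul_cancel₀ (ne_of_gt hfx0)]
      have hhy : h y = 0 := by
        rw [hhdef, ContinuousLinearMap.smul_apply, smul_eq_mul, hfy, mul_zero]
      have hhQ : c * ‖h‖ ≤ 1 := by
        rw [hhdef, hns, abs_inv, abs_of_pos hfx0]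
        rw [mul_comm (f x)⁻¹ ‖f‖, ← mul_assoc]
        rw [mul_inv_le_iff₀ hfx0, one_mul]
        exact le_trans hcfu hfx
      -- h = f₀ + s • z
      have hhx0 : (h - f₀) x = 0 := by
        rw [ContinuousLinearMap.sub_apply, hhx, hf₀x, sub_self]
      have hs' := hker (h - f₀) hhx0
      set s : ℝ := (h - f₀) e with hsdef
      have hhs : h = f₀ + s • z := by
        rw [← hs']; abel
      have hsI : s ∈ I := by
        show c * ‖f₀ + s • z‖ ≤ 1
        rw [← hhs]
        exact hhQ
      obtain ⟨has, hsb⟩ := hmem_ab s hsI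
      have hf₀y : f₀ y = -(s * z y) := by
        have h6 : h y = f₀ y + s * z y := by
          rw [hhs]
          simp only [ContinuousLinearMap.add_apply, ContinuousLinearMap.smul_apply, smul_eq_mul]
        rw [hhy] at h6
        linarith
      have hg1y : g₁ y = (a - s) * z y := by
        simp only [hg₁def, ContinuousLinearMap.add_apply, ContinuousLinearMap.smul_apply,
          smul_eq_mul, hf₀y]
        ring
      have hg2y : g₂ y = (b - s) * z y := by
        simp only [hg₂def, ContinuousLinearMap.add_apply, ContinuousLinearMap.smul_apply,
          smul_eq_mul, hf₀y]
        ring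
      rw [hg1y, hg2y]
      have h7 : 0 ≤ (s - a) * ((b - s) * (z y)^2) :=
        mul_nonneg (by linarith) (mul_nonneg (by linarith) (sq_nonneg _))
      calc (a - s) * z y * ((b - s) * z y) = -((s - a) * ((b - s) * (z y)^2)) := by ring
      _ ≤ 0 := by linarith
    · intro hy l
      obtain ⟨f, hfne, hfQ, hfy⟩ : ∃ f : X →L[ℝ] ℝ, f ≠ 0 ∧ c * ‖f‖ ≤ f x ∧ f y = 0 := by
        rcases eq_or_ne (g₁ y) 0 with h1 | h1
        · refine ⟨g₁, ?_, by rw [hg₁x]; exact hg₁Q, h1⟩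
          intro h; rw [h] at hg₁x; simp at hg₁x
        rcases eq_or_ne (g₂ y) 0 with h2 | h2
        · refine ⟨g₂, ?_, by rw [hg₂x]; exact hg₂Q, h2⟩
          intro h; rw [h] at hg₂x; simp at hg₂x
        · refine ⟨|g₂ y| • g₁ + |g₁ y| • g₂, ?_, ?_, ?_⟩
          · intro h
            have := congrArg (fun φ : X →L[ℝ] ℝ => φ x) h
            simp only [ContinuousLinearMap.add_apply, ContinuousLinearMap.smul_apply,
              smul_eq_mul, hg₁x, hg₂x, mul_one, ContinuousLinearMap.zero_apply] at this
            have := abs_pos.2 h1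
            have := abs_pos.2 h2
            linarith
          · have hn : ‖|g₂ y| • g₁ + |g₁ y| • g₂‖ ≤ |g₂ y| * ‖g₁‖ + |g₁ y| * ‖g₂‖ := by
              calc ‖|g₂ y| • g₁ + |g₁ y| • g₂‖ ≤ ‖|g₂ y| • g₁‖ + ‖|g₁ y| • g₂‖ := norm_add_le _ _
              _ = |g₂ y| * ‖g₁‖ + |g₁ y| * ‖g₂‖ := by
                rw [hns, hns, abs_abs, abs_abs]
            have hval : (|g₂ y| • g₁ + |g₁ y| • g₂) x = |g₂ y| + |g₁ y| := by
              simp only [ContinuousLinearMap.add_apply, ContinuousLinearMap.smul_apply,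
                smul_eq_mul, hg₁x, hg₂x, mul_one]
            rw [hval]
            calc c * ‖|g₂ y| • g₁ + |g₁ y| • g₂‖ ≤ c * (|g₂ y| * ‖g₁‖ + |g₁ y| * ‖g₂‖) :=
              mul_le_mul_of_nonneg_left hn (le_of_lt hc0)
            _ = |g₂ y| * (c * ‖g₁‖) + |g₁ y| * (c * ‖g₂‖) := by ring
            _ ≤ |g₂ y| * 1 + |g₁ y| * 1 := by
              apply add_le_add
              · exact mul_le_mul_of_nonneg_left hg₁Q (abs_nonneg _)
              · exact mul_le_mul_of_nonneg_left hg₂Q (abs_nonneg _)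
            _ = |g₂ y| + |g₁ y| := by ring
          · simp only [ContinuousLinearMap.add_apply, ContinuousLinearMap.smul_apply,
              smul_eq_mul]
            have hprod : g₁ y * g₂ y < 0 := lt_of_le_of_ne hy (by
              intro h
              rcases mul_eq_zero.1 h with h' | h'
              · exact h1 h'
              · exact h2 h')
            rcases lt_or_gt_of_ne h1 with h1' | h1'
            · have h2' : 0 < g₂ y := by nlinarith
              rw [abs_of_pos h2', abs_of_neg h1']
              ring
            · have h2' : g₂ y < 0 := by nlinarith
              rw [abs_of_neg h2', abs_of_pos h1']
              ring
      exact hQ_lower f y hfne hfQ hfy l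
  -- abbreviation for the cone set
  have hconegoal : ∀ v₁ v₂ : X, ‖v₁‖ = 1 → ‖v₂‖ = 1 →
      ({w : X | ∃ α β : ℝ, 0 ≤ α ∧ 0 ≤ β ∧ w = α • v₁ + β • v₂} ∩
        -{w : X | ∃ α β : ℝ, 0 ≤ α ∧ 0 ≤ β ∧ w = α • v₁ + β • v₂} = {0}) →
      ({y : X | g₁ y * g₂ y ≤ 0} =
        {w : X | ∃ α β : ℝ, 0 ≤ α ∧ 0 ≤ β ∧ w = α • v₁ + β • v₂} ∪
          -{w : X | ∃ α β : ℝ, 0 ≤ α ∧ 0 ≤ β ∧ w = α • v₁ + β • v₂}) →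
      ∃ v₁ v₂ : X, ‖v₁‖ = 1 ∧ ‖v₂‖ = 1 ∧
      ({w : X | ∃ α β : ℝ, 0 ≤ α ∧ 0 ≤ β ∧ w = α • v₁ + β • v₂} ∩
        -{w : X | ∃ α β : ℝ, 0 ≤ α ∧ 0 ≤ β ∧ w = α • v₁ + β • v₂} = {0}) ∧
      {y : X | ∀ l : ℝ, ‖x + l • y‖ ≥ c} =
        {w : X | ∃ α β : ℝ, 0 ≤ α ∧ 0 ≤ β ∧ w = α • v₁ + β • v₂} ∪
          -{w : X | ∃ α β : ℝ, 0 ≤ α ∧ 0 ≤ β ∧ w = α • v₁ + β • v₂} := by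
    intro v₁ v₂ h1 h2 h3 h4
    refine ⟨v₁, v₂, h1, h2, h3, ?_⟩
    rw [← h4]
    ext y
    exact hFchar y
  -- common vector
  obtain ⟨e', he'def⟩ : ∃ t : X, t = e - (g₁ e) • x := ⟨_, rfl⟩
  have hg₁e' : g₁ e' = 0 := by
    rw [he'def, map_sub, map_smul, smul_eq_mul, hg₁x, mul_one, sub_self]
  have hze' : z e' = 1 := by
    rw [he'def, map_sub, map_smul, smul_eq_mul, hzx, mul_zero, sub_zero, hze]
  have he'0 : e' ≠ 0 := by
    intro h; rw [h, map_zero] at hze'; norm_num at hze'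
  have hne' : ‖e'‖ ≠ 0 := norm_ne_zero_iff.2 he'0
  have hne'pos : 0 < ‖e'‖ := norm_pos_iff.2 he'0
  rcases eq_or_lt_of_le hab with hcase | hcase
  · -- degenerate case : g₁ = g₂, F is a line
    have hgg : ∀ w : X, g₂ w = g₁ w := by
      intro w; rw [hg₂g₁, ← hcase, sub_self, zero_mul, add_zero]
    obtain ⟨v, hvdef⟩ : ∃ t : X, t = ‖e'‖⁻¹ • e' := ⟨_, rfl⟩
    have hv : ‖v‖ = 1 := by
      rw [hvdef, show ‖(‖e'‖⁻¹ : ℝ) • e'‖ = ‖(‖e'‖⁻¹ : ℝ)‖ * ‖e'‖ from norm_smul _ _,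
        Real.norm_eq_abs, abs_inv, abs_norm, inv_mul_cancel₀ hne']
    have hv0 : v ≠ 0 := by
      intro h; rw [h, norm_zero] at hv; norm_num at hv
    have hsv : ∀ t : ℝ, (t * ‖e'‖) • v = t • e' := by
      intro t
      rw [hvdef, smul_smul, mul_assoc, mul_inv_cancel₀ hne', mul_one]
    apply hconegoal v v hv hv
    · ext w
      simp only [Set.mem_inter_iff, Set.mem_neg, Set.mem_singleton_iff, Set.mem_setOf_eq]
      constructor
      · rintro ⟨⟨α, β, hα, hβ, rfl⟩, ⟨α', β', hα', hβ', h'⟩⟩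
        have hsum : (α + β + (α' + β')) • v = 0 := by
          calc (α + β + (α' + β')) • v = (α • v + β • v) + (α' • v + β' • v) := by module
          _ = (α • v + β • v) + -(α • v + β • v) := by rw [← h']
          _ = 0 := by abel
        rcases smul_eq_zero.1 hsum with h | h
        · have hα0 : α = 0 := by linarith
          have hβ0 : β = 0 := by linarith
          rw [hα0, hβ0]; module
        · exact absurd h hv0
      · rintro rfl
        exact ⟨⟨0, 0, le_rfl, le_rfl, by simp⟩, ⟨0, 0, le_rfl, le_rfl, by simp⟩⟩
    · ext y
      simp only [Set.mem_setOf_eq, Set.mem_union, Set.mem_neg]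
      constructor
      · intro hy
        rw [hgg y] at hy
        have hy0 : g₁ y = 0 := by nlinarith
        have hz0 : y = (z y) • e' := by
          have hd : y - (z y) • e' = 0 := by
            apply hinj g₁ hg₁x
            · rw [map_sub, map_smul, smul_eq_mul, hy0, hg₁e', mul_zero, sub_zero]
            · rw [map_sub, map_smul, smul_eq_mul, hze', mul_one, sub_self]
          rwa [sub_eq_zero] at hd
        rcases le_or_gt 0 (z y) with hzy | hzy
        · left
          exact ⟨z y * ‖e'‖, 0, mul_nonneg hzy (norm_nonneg _), le_rfl, by
            rw [zero_smul, add_zero, hsv]; exact hz0⟩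
        · right
          refine ⟨-(z y) * ‖e'‖, 0,
            mul_nonneg (by linarith) (norm_nonneg _), le_rfl, ?_⟩
          rw [zero_smul, add_zero, hsv, neg_smul]
          exact congrArg Neg.neg hz0
      · have hg₁v : g₁ v = 0 := by
          rw [hvdef, map_smul, smul_eq_mul, hg₁e', mul_zero]
        rintro (⟨α, β, hα, hβ, rfl⟩ | ⟨α, β, hα, hβ, h'⟩)
        · have h1 : g₁ (α • v + β • v) = 0 := by
            rw [map_add, map_smul, map_smul, smul_eq_mul, smul_eq_mul, hg₁v]
            ring
          rw [hgg, h1, mul_zero]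
        · have h1 : g₁ (-y) = 0 := by
            rw [h', map_add, map_smul, map_smul, smul_eq_mul, smul_eq_mul, hg₁v]
            ring
          rw [map_neg, neg_eq_zero] at h1
          rw [hgg, h1, mul_zero]
  · -- nondegenerate case
    obtain ⟨d, hddef⟩ : ∃ t : ℝ, t = (b - a)⁻¹ := ⟨_, rfl⟩
    have hba : (0:ℝ) < b - a := sub_pos.2 hcase
    have hd0 : 0 < d := hddef ▸ inv_pos.2 hba
    have hdb : (b - a) * d = 1 := by rw [hddef]; exact mul_inv_cancel₀ (ne_of_gt hba)
    obtain ⟨w₁, hw₁def⟩ : ∃ t : X, t = x - d • e' := ⟨_, rfl⟩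
    obtain ⟨w₂, hw₂def⟩ : ∃ t : X, t = -(d • e') := ⟨_, rfl⟩
    have hg₁w₁ : g₁ w₁ = 1 := by
      rw [hw₁def, map_sub, map_smul, smul_eq_mul, hg₁x, hg₁e', mul_zero, sub_zero]
    have hzw₁ : z w₁ = -d := by
      rw [hw₁def, map_sub, map_smul, smul_eq_mul, hzx, hze', mul_one, zero_sub]
    have hg₂w₁ : g₂ w₁ = 0 := by
      rw [hg₂g₁, hg₁w₁, hzw₁]
      linear_combination -hdb
    have hg₁w₂ : g₁ w₂ = 0 := by
      rw [hw₂def, map_neg, map_smul, smul_eq_mul, hg₁e', mul_zero, neg_zero]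
    have hzw₂ : z w₂ = -d := by
      rw [hw₂def, map_neg, map_smul, smul_eq_mul, hze', mul_one]
    have hg₂w₂ : g₂ w₂ = -1 := by
      rw [hg₂g₁, hg₁w₂, hzw₂]
      linear_combination -hdb
    have hw₁0 : w₁ ≠ 0 := by
      intro h; rw [h, map_zero] at hg₁w₁; norm_num at hg₁w₁
    have hw₂0 : w₂ ≠ 0 := by
      intro h; rw [h, map_zero] at hg₂w₂; norm_num at hg₂w₂
    have hn₁ : ‖w₁‖ ≠ 0 := norm_ne_zero_iff.2 hw₁0
    have hn₂ : ‖w₂‖ ≠ 0 := norm_ne_zero_iff.2 hw₂0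
    have hn₁pos : 0 < ‖w₁‖ := norm_pos_iff.2 hw₁0
    have hn₂pos : 0 < ‖w₂‖ := norm_pos_iff.2 hw₂0
    obtain ⟨v₁, hv₁def⟩ : ∃ t : X, t = ‖w₁‖⁻¹ • w₁ := ⟨_, rfl⟩
    obtain ⟨v₂, hv₂def⟩ : ∃ t : X, t = ‖w₂‖⁻¹ • w₂ := ⟨_, rfl⟩
    have hv₁ : ‖v₁‖ = 1 := by
      rw [hv₁def, show ‖(‖w₁‖⁻¹ : ℝ) • w₁‖ = ‖(‖w₁‖⁻¹ : ℝ)‖ * ‖w₁‖ from norm_smul _ _,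
        Real.norm_eq_abs, abs_inv, abs_norm, inv_mul_cancel₀ hn₁]
    have hv₂ : ‖v₂‖ = 1 := by
      rw [hv₂def, show ‖(‖w₂‖⁻¹ : ℝ) • w₂‖ = ‖(‖w₂‖⁻¹ : ℝ)‖ * ‖w₂‖ from norm_smul _ _,
        Real.norm_eq_abs, abs_inv, abs_norm, inv_mul_cancel₀ hn₂]
    have hsw₁ : ∀ t : ℝ, (t * ‖w₁‖) • v₁ = t • w₁ := by
      intro t; rw [hv₁def, smul_smul, mul_assoc, mul_inv_cancel₀ hn₁, mul_one]
    have hsw₂ : ∀ t : ℝ, (t * ‖w₂‖) • v₂ = t • w₂ := by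
      intro t; rw [hv₂def, smul_smul, mul_assoc, mul_inv_cancel₀ hn₂, mul_one]
    have hg₁v₁ : g₁ v₁ = ‖w₁‖⁻¹ := by
      rw [hv₁def, map_smul, smul_eq_mul, hg₁w₁, mul_one]
    have hg₂v₁ : g₂ v₁ = 0 := by
      rw [hv₁def, map_smul, smul_eq_mul, hg₂w₁, mul_zero]
    have hg₁v₂ : g₁ v₂ = 0 := by
      rw [hv₂def, map_smul, smul_eq_mul, hg₁w₂, mul_zero]
    have hg₂v₂ : g₂ v₂ = -‖w₂‖⁻¹ := by
      rw [hv₂def, map_smul, smul_eq_mul, hg₂w₂]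
      ring
    -- decomposition
    have hdec : ∀ y : X, y = (g₁ y) • w₁ + (-(g₂ y)) • w₂ := by
      intro y
      have hd' : y - ((g₁ y) • w₁ + (-(g₂ y)) • w₂) = 0 := by
        apply hinj g₁ hg₁x
        · rw [map_sub, map_add, map_smul, map_smul, smul_eq_mul, smul_eq_mul,
            hg₁w₁, hg₁w₂]
          ring
        · rw [map_sub, map_add, map_smul, map_smul, smul_eq_mul, smul_eq_mul,
            hzw₁, hzw₂]
          have h8 : g₂ y = g₁ y + (b - a) * z y := hg₂g₁ y
          linear_combination (-d) * h8 + (-(z y)) * hdb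
      rwa [sub_eq_zero] at hd'
    apply hconegoal v₁ v₂ hv₁ hv₂
    · ext w
      simp only [Set.mem_inter_iff, Set.mem_neg, Set.mem_singleton_iff, Set.mem_setOf_eq]
      constructor
      · rintro ⟨⟨α, β, hα, hβ, rfl⟩, ⟨α', β', hα', hβ', h'⟩⟩
        have e1 : -(α * ‖w₁‖⁻¹) = α' * ‖w₁‖⁻¹ := by
          have := congrArg g₁ h'
          rwa [map_neg, map_add, map_add, map_smul, map_smul, map_smul, map_smul,
            smul_eq_mul, smul_eq_mul, smul_eq_mul, smul_eq_mul, hg₁v₁, hg₁v₂,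
            mul_zero, add_zero, mul_zero, add_zero] at this
        have e2 : -(β * (-‖w₂‖⁻¹)) = β' * (-‖w₂‖⁻¹) := by
          have := congrArg g₂ h'
          rwa [map_neg, map_add, map_add, map_smul, map_smul, map_smul, map_smul,
            smul_eq_mul, smul_eq_mul, smul_eq_mul, smul_eq_mul, hg₂v₁, hg₂v₂,
            mul_zero, zero_add, mul_zero, zero_add] at this
        have hi₁ : 0 < ‖w₁‖⁻¹ := inv_pos.2 hn₁pos
        have hi₂ : 0 < ‖w₂‖⁻¹ := inv_pos.2 hn₂pos
        have p1 : 0 ≤ α * ‖w₁‖⁻¹ := mul_nonneg hα (le_of_lt hi₁)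
        have p2 : 0 ≤ α' * ‖w₁‖⁻¹ := mul_nonneg hα' (le_of_lt hi₁)
        have q1 : α * ‖w₁‖⁻¹ = 0 := by linarith
        have hα0 : α = 0 := by
          rcases mul_eq_zero.1 q1 with h | h
          · exact h
          · exact absurd h (ne_of_gt hi₁)
        have p3 : 0 ≤ β * ‖w₂‖⁻¹ := mul_nonneg hβ (le_of_lt hi₂)
        have p4 : 0 ≤ β' * ‖w₂‖⁻¹ := mul_nonneg hβ' (le_of_lt hi₂)
        have q2 : β * ‖w₂‖⁻¹ = 0 := by linarith
        have hβ0 : β = 0 := by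
          rcases mul_eq_zero.1 q2 with h | h
          · exact h
          · exact absurd h (ne_of_gt hi₂)
        rw [hα0, hβ0]; module
      · rintro rfl
        exact ⟨⟨0, 0, le_rfl, le_rfl, by simp⟩, ⟨0, 0, le_rfl, le_rfl, by simp⟩⟩
    · ext y
      simp only [Set.mem_setOf_eq, Set.mem_union, Set.mem_neg]
      constructor
      · intro hy
        rcases mul_nonpos_iff.1 hy with ⟨h1, h2⟩ | ⟨h1, h2⟩
        · left
          refine ⟨g₁ y * ‖w₁‖, -(g₂ y) * ‖w₂‖, mul_nonneg h1 (norm_nonneg _),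
            mul_nonneg (by linarith) (norm_nonneg _), ?_⟩
          rw [hsw₁, hsw₂]
          exact hdec y
        · right
          refine ⟨-(g₁ y) * ‖w₁‖, g₂ y * ‖w₂‖, mul_nonneg (by linarith) (norm_nonneg _),
            mul_nonneg h2 (norm_nonneg _), ?_⟩
          rw [hsw₁, hsw₂]
          have := congrArg Neg.neg (hdec y)
          rw [neg_add, ← neg_smul, ← neg_smul, neg_neg] at this
          exact this
      · rintro (⟨α, β, hα, hβ, rfl⟩ | ⟨α, β, hα, hβ, h'⟩)
        · have e1 : g₁ (α • v₁ + β • v₂) = α * ‖w₁‖⁻¹ := by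
            rw [map_add, map_smul, map_smul, smul_eq_mul, smul_eq_mul, hg₁v₁, hg₁v₂,
              mul_zero, add_zero]
          have e2 : g₂ (α • v₁ + β • v₂) = -(β * ‖w₂‖⁻¹) := by
            rw [map_add, map_smul, map_smul, smul_eq_mul, smul_eq_mul, hg₂v₁, hg₂v₂,
              mul_zero, zero_add]
            ring
          rw [e1, e2]
          have h9 : 0 ≤ (α * ‖w₁‖⁻¹) * (β * ‖w₂‖⁻¹) :=
            mul_nonneg (mul_nonneg hα (inv_nonneg.2 (norm_nonneg _)))
              (mul_nonneg hβ (inv_nonneg.2 (norm_nonneg _)))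
          linarith [h9, mul_neg (α * ‖w₁‖⁻¹) (β * ‖w₂‖⁻¹)]
        · have e1 : g₁ y = -(α * ‖w₁‖⁻¹) := by
            have := congrArg g₁ h'
            rw [map_neg, map_add, map_smul, map_smul, smul_eq_mul, smul_eq_mul,
              hg₁v₁, hg₁v₂, mul_zero, add_zero] at this
            linarith
          have e2 : g₂ y = β * ‖w₂‖⁻¹ := by
            have := congrArg g₂ h'
            rw [map_neg, map_add, map_smul, map_smul, smul_eq_mul, smul_eq_mul,
              hg₂v₁, hg₂v₂, mul_zero, zero_add] at this
            linarith
          rw [e1, e2]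
          have h9 : 0 ≤ (α * ‖w₁‖⁻¹) * (β * ‖w₂‖⁻¹) :=
            mul_nonneg (mul_nonneg hα (inv_nonneg.2 (norm_nonneg _)))
              (mul_nonneg hβ (inv_nonneg.2 (norm_nonneg _)))
          linarith [h9, neg_mul (α * ‖w₁‖⁻¹) (β * ‖w₂‖⁻¹)]
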